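/- In the barrier-KKT context, let (x^μ, λ̄, ν) be a μ-central point, let x* ∈ 𝒞, and suppose there is a > 0 such that ⟪F(x), x − x*⟫ ≥ a·‖x − x*‖ for all x ∈ 𝒞. Then ‖x^μ − x*‖ ≤ m·μ/a. -/

import Mathlib

open scoped RealInnerProductSpace
open Matrix

/-- The feasible set `𝒞 = {x | φ_i(x) ≤ 0 for all i, and C x = d}`. -/
def FeasSet {n m p : ℕ} (φ : Fin m → EuclideanSpace ℝ (Fin n) → ℝ)
    (C : Matrix (Fin p) (Fin n) ℝ) (d : EuclideanSpace ℝ (Fin p)) :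
    Set (EuclideanSpace ℝ (Fin n)) :=
  {x | (∀ i, φ i x ≤ 0) ∧ Matrix.toEuclideanLin C x = d}

/-- A `μ`-central point `(x^μ, λ̄, ν)`: positive multipliers, stationarity, perturbed
complementarity `λ̄ᵢ φᵢ(x^μ) = −μ`, and primal feasibility `C x^μ = d`. -/
def IsMuCentral {n m p : ℕ} (F : EuclideanSpace ℝ (Fin n) → EuclideanSpace ℝ (Fin n))
    (φ : Fin m → EuclideanSpace ℝ (Fin n) → ℝ)
    (C : Matrix (Fin p) (Fin n) ℝ) (d : EuclideanSpace ℝ (Fin p)) (μ : ℝ)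
    (xμ : EuclideanSpace ℝ (Fin n)) (lamb : Fin m → ℝ)
    (ν : EuclideanSpace ℝ (Fin p)) : Prop :=
  (∀ i, 0 < lamb i) ∧
  F xμ + (∑ i, lamb i • gradient (φ i) xμ) + Matrix.toEuclideanLin Cᵀ ν = 0 ∧
  (∀ i, lamb i * φ i xμ = -μ) ∧
  Matrix.toEuclideanLin C xμ = d

/-- First-order condition for a differentiable convex function. -/
lemma grad_ineq {n : ℕ} {φ : EuclideanSpace ℝ (Fin n) → ℝ}
    (hconv : ConvexOn ℝ Set.univ φ) (hdiff : Differentiable ℝ φ)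
    (x y : EuclideanSpace ℝ (Fin n)) :
    ⟪gradient φ x, y - x⟫ ≤ φ y - φ x := by
  set g : ℝ → ℝ := fun t => φ (x + t • (y - x)) with hg
  have hline : ∀ t : ℝ, HasDerivAt (fun t : ℝ => x + t • (y - x)) (y - x) t := by
    intro t
    simpa using ((hasDerivAt_id t).smul_const (y - x)).const_add x
  have hgrad : HasGradientAt φ (gradient φ x) x := (hdiff x).hasGradientAt
  have hfd : HasFDerivAt φ ((InnerProductSpace.toDual ℝ _) (gradient φ x)) x :=
    hasGradientAt_iff_hasFDerivAt.mp hgrad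
  have hfd0 : HasFDerivAt φ ((InnerProductSpace.toDual ℝ _) (gradient φ x))
      (x + (0 : ℝ) • (y - x)) := by simpa using hfd
  have hgderiv : HasDerivAt g ⟪gradient φ x, y - x⟫ 0 := by
    have := hfd0.comp_hasDerivAt 0 (hline 0)
    rw [InnerProductSpace.toDual_apply_apply] at this
    exact this
  have hgconv : ConvexOn ℝ Set.univ g := by
    have := hconv.comp_affineMap
      (AffineMap.lineMap x y : ℝ →ᵃ[ℝ] EuclideanSpace ℝ (Fin n))
    have heq : (φ ∘ (AffineMap.lineMap x y : ℝ →ᵃ[ℝ] EuclideanSpace ℝ (Fin n))) = g := by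
      funext t
      simp [g, AffineMap.lineMap_apply]
      congr 1
      abel
    rw [heq] at this
    simpa using this
  have hslope := hgconv.le_slope_of_hasDerivAt (Set.mem_univ (0:ℝ)) (Set.mem_univ (1:ℝ))
    one_pos hgderiv
  have h0 : g 0 = φ x := by simp [g]
  have h1 : g 1 = φ y := by simp [g]
  have : slope g 0 1 = φ y - φ x := by
    rw [slope_def_field]; simp [h0, h1]
  linarith [hslope, this ▸ hslope]

/-- Lemma on `‖x^μ − x*‖` under the acute-angle condition:
`‖x^μ − x*‖ ≤ m μ / a`. -/
theorem stmt_18 {n m p : ℕ}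
    (φ : Fin m → EuclideanSpace ℝ (Fin n) → ℝ)
    (hφconv : ∀ i, ConvexOn ℝ Set.univ (φ i))
    (hφdiff : ∀ i, Differentiable ℝ (φ i))
    (C : Matrix (Fin p) (Fin n) ℝ) (d : EuclideanSpace ℝ (Fin p))
    (μ : ℝ) (hμ : 0 < μ)
    (F : EuclideanSpace ℝ (Fin n) → EuclideanSpace ℝ (Fin n))
    (xμ : EuclideanSpace ℝ (Fin n)) (lamb : Fin m → ℝ) (ν : EuclideanSpace ℝ (Fin p))
    (hcentral : IsMuCentral F φ C d μ xμ lamb ν)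
    (xstar : EuclideanSpace ℝ (Fin n)) (hxstar : xstar ∈ FeasSet φ C d)
    (a : ℝ) (ha : 0 < a)
    (hacute : ∀ x ∈ FeasSet φ C d, a * ‖x - xstar‖ ≤ ⟪F x, x - xstar⟫) :
    ‖xμ - xstar‖ ≤ (m : ℝ) * μ / a := by
  obtain ⟨hpos, hstat, hcomp, hfeas⟩ := hcentral
  obtain ⟨hxs1, hxs2⟩ := hxstar
  -- xμ is feasible
  have hφμ : ∀ i, φ i xμ < 0 := by
    intro i
    have h := hcomp i
    have hl := hpos i
    nlinarith
  have hxμfeas : xμ ∈ FeasSet φ C d := ⟨fun i => (hφμ i).le, hfeas⟩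
  -- the equality-constraint term vanishes
  have hCT : ⟪Matrix.toEuclideanLin Cᵀ ν, xμ - xstar⟫ = 0 := by
    have hadj : Matrix.toEuclideanLin Cᵀ = LinearMap.adjoint (Matrix.toEuclideanLin C) := by
      rw [← Matrix.toEuclideanLin_conjTranspose_eq_adjoint,
        Matrix.conjTranspose_eq_transpose_of_trivial]
    rw [hadj, LinearMap.adjoint_inner_left, map_sub, hfeas, hxs2, sub_self, inner_zero_right]
  -- each barrier term is at most μ
  have hterm : ∀ i, -(lamb i * ⟪gradient (φ i) xμ, xμ - xstar⟫) ≤ μ := by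
    intro i
    have hgi := grad_ineq (hφconv i) (hφdiff i) xμ xstar
    have hflip : φ i xμ - φ i xstar ≤ ⟪gradient (φ i) xμ, xμ - xstar⟫ := by
      have : ⟪gradient (φ i) xμ, xμ - xstar⟫ = -⟪gradient (φ i) xμ, xstar - xμ⟫ := by
        rw [← inner_neg_right]; congr 1; abel
      rw [this]; linarith
    have hl := hpos i
    have hc := hcomp i
    have hs := hxs1 i
    nlinarith
  -- bound the inner product
  have hinner : ⟪F xμ, xμ - xstar⟫ ≤ (m : ℝ) * μ := by
    have hF : F xμ = -(∑ i, lamb i • gradient (φ i) xμ) - Matrix.toEuclideanLin Cᵀ ν := by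
      have := hstat
      apply eq_sub_of_add_eq
      apply eq_neg_of_add_eq_zero_left
      linear_combination (norm := module) this
    rw [hF, inner_sub_left, hCT, sub_zero, inner_neg_left, sum_inner]
    simp_rw [real_inner_smul_left]
    rw [neg_le]
    have h := Finset.sum_le_sum (fun i (_ : i ∈ Finset.univ) => hterm i)
    simp only [Finset.sum_neg_distrib, Finset.sum_const, Finset.card_univ,
      Fintype.card_fin, nsmul_eq_mul] at h
    linarith
  have hkey := (hacute xμ hxμfeas).trans hinner
  rw [le_div_iff₀ ha]
  linarith [hkey, mul_comm a ‖xμ - xstar‖]
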